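/- Suppose (u_h, v_h, q_h) solves the dissipative semi-discrete LDG Scheme D1 on [0,T]. Then for every t ∈ [0,T]: (d/dt) ∫_a^b u_h(t,x) dx = 0 (conservation of mass E₀) and (d/dt) ∫_a^b u_h(t,x)² dx ≤ 0 (dissipation of energy E₂). -/

import Mathlib

open Polynomial Set

noncomputable section

namespace FW

variable {N : ℕ}

/-- Minus trace `ω⁻` at interface `j+1/2` (right end of cell `j`). -/
def trM (x : Fin (N + 1) → ℝ) (ω : Fin N → Polynomial ℝ) (j : Fin N) : ℝ :=
  (ω j).eval (x j.succ)

/-- Plus trace `ω⁺` at interface `j+1/2` (left end of the next cell, cyclically). -/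
def trP [NeZero N] (x : Fin (N + 1) → ℝ) (ω : Fin N → Polynomial ℝ) (j : Fin N) : ℝ :=
  (ω (j + 1)).eval (x (j + 1).castSucc)

/-- Average trace `{ω}`. -/
def trA [NeZero N] (x : Fin (N + 1) → ℝ) (ω : Fin N → Polynomial ℝ) (j : Fin N) : ℝ :=
  (trP x ω j + trM x ω j) / 2

/-- Jump `[ω]`. -/
def jmp [NeZero N] (x : Fin (N + 1) → ℝ) (ω : Fin N → Polynomial ℝ) (j : Fin N) : ℝ :=
  trP x ω j - trM x ω j

/-- Cell L² pairing `(u, φ)_{I_j}` of a piecewise polynomial with a test polynomial. -/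
def ipj (x : Fin (N + 1) → ℝ) (u : Fin N → Polynomial ℝ) (j : Fin N) (φ : Polynomial ℝ) : ℝ :=
  ∫ t in (x j.castSucc)..(x j.succ), (u j).eval t * φ.eval t

/-- Cell pairing `(f∘u, φ)_{I_j}`. -/
def ipfj (x : Fin (N + 1) → ℝ) (f : ℝ → ℝ) (u : Fin N → Polynomial ℝ) (j : Fin N)
    (φ : Polynomial ℝ) : ℝ :=
  ∫ t in (x j.castSucc)..(x j.succ), f ((u j).eval t) * φ.eval t

/-- Boundary pairing `⟨g, φ⟩_{I_j}` for interface values `g`. -/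
def bdj [NeZero N] (x : Fin (N + 1) → ℝ) (g : Fin N → ℝ) (j : Fin N) (φ : Polynomial ℝ) : ℝ :=
  g j * φ.eval (x j.succ) - g (j - 1) * φ.eval (x j.castSucc)

/-- Membership in the space `V_h^k` of piecewise polynomials of degree at most `k`. -/
def memV (k : ℕ) (ω : Fin N → Polynomial ℝ) : Prop :=
  ∀ j, (ω j).degree ≤ (k : WithBot ℕ)

/-- `L⁻(ω, φ)`. -/
def Lm [NeZero N] (x : Fin (N + 1) → ℝ) (ω φ : Fin N → Polynomial ℝ) : ℝ :=
  ∑ j, (-(ipj x ω j (derivative (φ j))) + bdj x (trM x ω) j (φ j))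

/-- `L⁺(ω, φ)`. -/
def Lp [NeZero N] (x : Fin (N + 1) → ℝ) (ω φ : Fin N → Polynomial ℝ) : ℝ :=
  ∑ j, (-(ipj x ω j (derivative (φ j))) + bdj x (trP x ω) j (φ j))

/-- `L^c(ω, φ)`. -/
def Lc [NeZero N] (x : Fin (N + 1) → ℝ) (ω φ : Fin N → Polynomial ℝ) : ℝ :=
  ∑ j, (-(ipj x ω j (derivative (φ j))) + bdj x (trA x ω) j (φ j))

/-- Godunov numerical flux. -/
def godunov (f : ℝ → ℝ) (c d : ℝ) : ℝ :=
  if c < d then sInf (f '' Set.Icc c d) else sSup (f '' Set.Icc d c)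

/-- Conservative numerical flux for `f(u) = u^p/p`, `F(u) = u^(p+1)/(p(p+1))`. -/
def consFlux (p : ℕ) (c d : ℝ) : ℝ :=
  if c = d then c ^ p / (p : ℝ)
  else (d ^ (p + 1) / ((p : ℝ) * ((p : ℝ) + 1)) - c ^ (p + 1) / ((p : ℝ) * ((p : ℝ) + 1))) / (d - c)

/-- Dissipative (Godunov-flux) nonlinear form `N^d`. -/
def Nd [NeZero N] (x : Fin (N + 1) → ℝ) (f : ℝ → ℝ) (ω φ : Fin N → Polynomial ℝ) : ℝ :=
  ∑ j, (-(ipfj x f ω j (derivative (φ j)))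
    + bdj x (fun i => godunov f (trM x ω i) (trP x ω i)) j (φ j))

/-- Conservative-flux nonlinear form `N^c`. -/
def Nc [NeZero N] (x : Fin (N + 1) → ℝ) (p : ℕ) (ω φ : Fin N → Polynomial ℝ) : ℝ :=
  ∑ j, (-(ipfj x (fun w => w ^ p / (p : ℝ)) ω j (derivative (φ j)))
    + bdj x (fun i => consFlux p (trM x ω i) (trP x ω i)) j (φ j))

end FW

set_option linter.unusedSectionVars false
open Polynomial Finset intervalIntegral Set

open Polynomial Finset intervalIntegral Set

namespace FWP
variable {N : ℕ} [NeZero N] (x : Fin (N + 1) → ℝ)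

lemma sum_shift (h : Fin N → ℝ) : ∑ j, h (j - 1) = ∑ j, h j :=
  Fintype.sum_equiv (Equiv.subRight (1 : Fin N)) (fun j => h (j - 1)) h (fun _ => rfl)

lemma trP_pred (φ : Fin N → Polynomial ℝ) (j : Fin N) :
    FW.trP x φ (j - 1) = (φ j).eval (x j.castSucc) := by
  unfold FW.trP
  rw [sub_add_cancel]

/-- Summed boundary pairing. -/
lemma sum_bdj (g : Fin N → ℝ) (φ : Fin N → Polynomial ℝ) :
    ∑ j, FW.bdj x g j (φ j) = ∑ j, g j * (FW.trM x φ j - FW.trP x φ j) := by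
  unfold FW.bdj
  rw [Finset.sum_sub_distrib]
  have h2 : ∑ j, g (j - 1) * (φ j).eval (x j.castSucc)
      = ∑ j, g j * FW.trP x φ j := by
    rw [← sum_shift (fun i => g i * FW.trP x φ i)]
    refine Finset.sum_congr rfl fun j _ => ?_
    rw [trP_pred]
  rw [h2]
  rw [← Finset.sum_sub_distrib]
  refine Finset.sum_congr rfl fun j _ => ?_
  unfold FW.trM
  ring

lemma intPolyMul' (c d : ℝ) (P Q : Polynomial ℝ) :
    IntervalIntegrable (fun t => P.eval t * Q.eval t) MeasureTheory.volume c d :=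
  ((Polynomial.continuous P).mul (Polynomial.continuous Q)).intervalIntegrable c d

/-- Integration by parts for polynomials. -/
lemma ibp (c d : ℝ) (P Q : Polynomial ℝ) :
    (∫ t in c..d, P.eval t * (derivative Q).eval t)
      + ∫ t in c..d, Q.eval t * (derivative P).eval t
      = (P * Q).eval d - (P * Q).eval c := by
  rw [← intervalIntegral.integral_add (intPolyMul' c d P (derivative Q))
      (intPolyMul' c d Q (derivative P))]
  apply intervalIntegral.integral_eq_sub_of_hasDerivAt
  · intro y _
    have h := (P * Q).hasDerivAt y
    have h2 : eval y (derivative (P * Q))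
        = eval y P * eval y (derivative Q) + eval y Q * eval y (derivative P) := by
      simp [derivative_mul]; ring
    rw [h2] at h
    exact h
  · exact ((intPolyMul' c d P (derivative Q)).add (intPolyMul' c d Q (derivative P)))

/-- Summed integration by parts. -/
lemma sum_ibp (ω φ : Fin N → Polynomial ℝ) :
    (∑ j, FW.ipj x ω j (derivative (φ j))) + ∑ j, FW.ipj x φ j (derivative (ω j))
      = ∑ j, (FW.trM x ω j * FW.trM x φ j - FW.trP x ω j * FW.trP x φ j) := by
  rw [← Finset.sum_add_distrib]
  have h1 : ∀ j : Fin N, FW.ipj x ω j (derivative (φ j)) + FW.ipj x φ j (derivative (ω j))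
      = (ω j * φ j).eval (x j.succ) - (ω j * φ j).eval (x j.castSucc) := by
    intro j
    exact ibp _ _ _ _
  rw [Finset.sum_congr rfl fun j _ => h1 j, Finset.sum_sub_distrib]
  have h2 : ∑ j, (ω j * φ j).eval (x j.castSucc)
      = ∑ j, FW.trP x ω j * FW.trP x φ j := by
    rw [← sum_shift (fun i => FW.trP x ω i * FW.trP x φ i)]
    refine Finset.sum_congr rfl fun j _ => ?_
    rw [trP_pred, trP_pred, eval_mul]
  rw [h2, ← Finset.sum_sub_distrib]
  refine Finset.sum_congr rfl fun j _ => ?_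
  rw [eval_mul]
  rfl

lemma ip_comm (ω φ : Fin N → Polynomial ℝ) (j : Fin N) :
    FW.ipj x ω j (φ j) = FW.ipj x φ j (ω j) := by
  unfold FW.ipj
  refine intervalIntegral.integral_congr fun y _ => mul_comm _ _

end FWP
namespace FWP
variable {N : ℕ} [NeZero N]

/-- Positivity of the summed auxiliary term `∑ (v, u)`. -/
lemma sum_vu_nonneg (x : Fin (N + 1) → ℝ) (k : ℕ) (U V Q : Fin N → Polynomial ℝ)
    (hU : FW.memV k U) (hV : FW.memV k V) (hQ : FW.memV k Q)
    (h2 : ∀ (j : Fin N), ∀ φ : Polynomial ℝ, φ.degree ≤ (k : WithBot ℕ) →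
      FW.ipj x V j φ - FW.bdj x (FW.trM x Q) j φ + FW.ipj x Q j (Polynomial.derivative φ)
        = FW.bdj x (FW.trM x U) j φ - FW.ipj x U j (Polynomial.derivative φ))
    (h3 : ∀ (j : Fin N), ∀ φ : Polynomial ℝ, φ.degree ≤ (k : WithBot ℕ) →
      FW.ipj x Q j φ
        = FW.bdj x (FW.trP x V) j φ - FW.ipj x V j (Polynomial.derivative φ)) :
    0 ≤ ∑ j, FW.ipj x V j (U j) := by
  set Mu := FW.trM x U with hMu
  set Pu := FW.trP x U with hPu
  set Mq := FW.trM x Q with hMq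
  set Pq := FW.trP x Q with hPq
  set Mv := FW.trM x V with hMv
  set Pv := FW.trP x V with hPv
  set aQU := ∑ j, FW.ipj x Q j (derivative (U j)) with haQU
  set aUQ := ∑ j, FW.ipj x U j (derivative (Q j)) with haUQ
  set aUU := ∑ j, FW.ipj x U j (derivative (U j)) with haUU
  set aQQ := ∑ j, FW.ipj x Q j (derivative (Q j)) with haQQ
  set aVV := ∑ j, FW.ipj x V j (derivative (V j)) with haVV
  set S := ∑ j, FW.ipj x V j (U j) with hS
  set SVQ := ∑ j, FW.ipj x V j (Q j) with hSVQ
  -- equation (1): from h2 tested with U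
  have e1 : S = (∑ j, Mq j * (Mu j - Pu j)) - aQU + (∑ j, Mu j * (Mu j - Pu j)) - aUU := by
    have : ∀ j : Fin N, FW.ipj x V j (U j)
        = FW.bdj x Mq j (U j) - FW.ipj x Q j (derivative (U j))
          + FW.bdj x Mu j (U j) - FW.ipj x U j (derivative (U j)) := by
      intro j; have := h2 j (U j) (hU j); linarith
    rw [hS, Finset.sum_congr rfl fun j _ => this j]
    simp only [Finset.sum_add_distrib, Finset.sum_sub_distrib, sum_bdj]
    try ring
  -- equation (2): from h2 tested with Q
  have e2 : SVQ = (∑ j, Mq j * (Mq j - Pq j)) - aQQ + (∑ j, Mu j * (Mq j - Pq j)) - aUQ := by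
    have : ∀ j : Fin N, FW.ipj x V j (Q j)
        = FW.bdj x Mq j (Q j) - FW.ipj x Q j (derivative (Q j))
          + FW.bdj x Mu j (Q j) - FW.ipj x U j (derivative (Q j)) := by
      intro j; have := h2 j (Q j) (hQ j); linarith
    rw [hSVQ, Finset.sum_congr rfl fun j _ => this j]
    simp only [Finset.sum_add_distrib, Finset.sum_sub_distrib, sum_bdj]
    try ring
  -- equation (3): from h3 tested with V
  have e3 : SVQ = (∑ j, Pv j * (Mv j - Pv j)) - aVV := by
    have hc : SVQ = ∑ j, FW.ipj x Q j (V j) :=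
      Finset.sum_congr rfl fun j _ => ip_comm x V Q j
    have : ∀ j : Fin N, FW.ipj x Q j (V j)
        = FW.bdj x Pv j (V j) - FW.ipj x V j (derivative (V j)) := by
      intro j; exact h3 j (V j) (hV j)
    rw [hc, Finset.sum_congr rfl fun j _ => this j]
    simp only [Finset.sum_sub_distrib, sum_bdj]
    rfl
  -- IBP relations
  have i1 : aQU + aUQ = ∑ j, (Mq j * Mu j - Pq j * Pu j) := sum_ibp x Q U
  have i2 : aUU + aUU = ∑ j, (Mu j * Mu j - Pu j * Pu j) := sum_ibp x U U
  have i3 : aQQ + aQQ = ∑ j, (Mq j * Mq j - Pq j * Pq j) := sum_ibp x Q Q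
  have i4 : aVV + aVV = ∑ j, (Mv j * Mv j - Pv j * Pv j) := sum_ibp x V V
  -- combine
  have key : S = ∑ j, ((Mv j - Pv j)^2/2 + ((Mu j - Pu j) + (Mq j - Pq j))^2/2) := by
    have hrhs : ∑ j, ((Mv j - Pv j)^2/2 + ((Mu j - Pu j) + (Mq j - Pq j))^2/2)
        = (∑ j, Mq j * (Mu j - Pu j)) + (∑ j, Mu j * (Mu j - Pu j))
          - (∑ j, (Mu j * Mu j - Pu j * Pu j))/2
          - (∑ j, (Mq j * Mu j - Pq j * Pu j))
          + (∑ j, Mq j * (Mq j - Pq j)) - (∑ j, (Mq j * Mq j - Pq j * Pq j))/2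
          + (∑ j, Mu j * (Mq j - Pq j))
          - (∑ j, Pv j * (Mv j - Pv j)) + (∑ j, (Mv j * Mv j - Pv j * Pv j))/2 := by
      simp only [Finset.sum_div, ← Finset.sum_add_distrib, ← Finset.sum_sub_distrib]
      refine Finset.sum_congr rfl fun j _ => ?_
      ring
    rw [hrhs]
    linarith
  rw [key]
  apply Finset.sum_nonneg
  intro j _
  positivity

end FWP
namespace FWP
variable {N : ℕ} [NeZero N]

/-- antiderivative of `w ^ p / p` -/
noncomputable def G (p : ℕ) (w : ℝ) : ℝ := w ^ (p + 1) / ((p : ℝ) * ((p : ℝ) + 1))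

lemma hasDerivAtG (p : ℕ) (hp : 1 ≤ p) (w : ℝ) :
    HasDerivAt (G p) (w ^ p / (p : ℝ)) w := by
  have hp0 : (p : ℝ) ≠ 0 := Nat.cast_ne_zero.2 (by omega)
  have hp1 : (p : ℝ) + 1 ≠ 0 := by positivity
  have h := (hasDerivAt_pow (p + 1) w).div_const ((p : ℝ) * ((p : ℝ) + 1))
  have he : ((p + 1 : ℕ) : ℝ) * w ^ (p + 1 - 1) / ((p : ℝ) * ((p : ℝ) + 1))
      = w ^ p / (p : ℝ) := by
    rw [Nat.add_sub_cancel]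
    push_cast
    field_simp
  rw [he] at h
  exact h

/-- FTC for `f ∘ P · P'`. -/
lemma int_f_eval (p : ℕ) (hp : 1 ≤ p) (c d : ℝ) (P : Polynomial ℝ) :
    ∫ y in c..d, (P.eval y) ^ p / (p : ℝ) * (derivative P).eval y
      = G p (P.eval d) - G p (P.eval c) := by
  apply intervalIntegral.integral_eq_sub_of_hasDerivAt
  · intro y _
    exact ((hasDerivAtG p hp (P.eval y)).comp y (P.hasDerivAt y))
  · exact (Continuous.intervalIntegrable
      ((((P.continuous).pow p).div_const _).mul (derivative P).continuous) c d)

/-- Key Godunov E-flux inequality. -/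
lemma godunov_key (p : ℕ) (hp : 1 ≤ p) (c d : ℝ) :
    FW.godunov (fun w => w ^ p / (p : ℝ)) c d * (d - c) ≤ G p d - G p c := by
  set f : ℝ → ℝ := fun w => w ^ p / (p : ℝ) with hf
  have hcont : Continuous f := by
    exact (continuous_pow p).div_const _
  have hftc : ∀ a b : ℝ, ∫ y in a..b, f y = G p b - G p a := by
    intro a b
    apply intervalIntegral.integral_eq_sub_of_hasDerivAt
    · intro y _; exact hasDerivAtG p hp y
    · exact hcont.intervalIntegrable a b
  unfold FW.godunov
  split_ifs with h
  · have hcd : c ≤ d := le_of_lt h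
    set m := sInf (f '' Set.Icc c d) with hm
    have hbdd : BddBelow (f '' Set.Icc c d) := (isCompact_Icc.image hcont).bddBelow
    have hle : ∀ y ∈ Set.Icc c d, m ≤ f y := fun y hy => csInf_le hbdd ⟨y, hy, rfl⟩
    have h1 : ∫ y in c..d, (fun _ => m) y ≤ ∫ y in c..d, f y := by
      exact intervalIntegral.integral_mono_on hcd
        (intervalIntegrable_const) (hcont.intervalIntegrable c d) hle
    rw [intervalIntegral.integral_const, hftc c d] at h1
    simpa [smul_eq_mul, mul_comm] using h1
  · have hdc : d ≤ c := le_of_not_gt h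
    set m := sSup (f '' Set.Icc d c) with hm
    have hbdd : BddAbove (f '' Set.Icc d c) := (isCompact_Icc.image hcont).bddAbove
    have hle : ∀ y ∈ Set.Icc d c, f y ≤ m := fun y hy => le_csSup hbdd ⟨y, hy, rfl⟩
    have h1 : ∫ y in d..c, f y ≤ ∫ y in d..c, (fun _ => m) y := by
      exact intervalIntegral.integral_mono_on hdc
        (hcont.intervalIntegrable d c) (intervalIntegrable_const) hle
    rw [intervalIntegral.integral_const, hftc d c] at h1
    have h2 : G p c - G p d ≤ m * (c - d) := by simpa [smul_eq_mul, mul_comm] using h1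
    nlinarith [h2]

/-- Positivity of the Godunov-flux nonlinear form at `φ = U`. -/
lemma sum_flux_nonneg (x : Fin (N + 1) → ℝ) (p : ℕ) (hp : 1 ≤ p) (U : Fin N → Polynomial ℝ) :
    0 ≤ (∑ j, FW.bdj x (fun i => FW.godunov (fun w => w ^ p / (p : ℝ))
          (FW.trM x U i) (FW.trP x U i)) j (U j))
        - ∑ j, FW.ipfj x (fun w => w ^ p / (p : ℝ)) U j (derivative (U j)) := by
  set f : ℝ → ℝ := fun w => w ^ p / (p : ℝ) with hf
  have h1 : ∑ j, FW.bdj x (fun i => FW.godunov f (FW.trM x U i) (FW.trP x U i)) j (U j)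
      = ∑ j, FW.godunov f (FW.trM x U j) (FW.trP x U j) * (FW.trM x U j - FW.trP x U j) :=
    sum_bdj x _ U
  have h2 : ∑ j, FW.ipfj x f U j (derivative (U j))
      = ∑ j, (G p (FW.trM x U j) - G p (FW.trP x U j)) := by
    have hcell : ∀ j : Fin N, FW.ipfj x f U j (derivative (U j))
        = G p (FW.trM x U j) - G p (FW.trP x U (j - 1)) := by
      intro j
      have := int_f_eval p hp (x j.castSucc) (x j.succ) (U j)
      unfold FW.ipfj FW.trM
      rw [trP_pred]
      exact this
    rw [Finset.sum_congr rfl fun j _ => hcell j, Finset.sum_sub_distrib,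
      sum_shift (fun i => G p (FW.trP x U i)), ← Finset.sum_sub_distrib]
  rw [h1, h2, ← Finset.sum_sub_distrib]
  apply Finset.sum_nonneg
  intro j _
  have hgk := godunov_key p hp (FW.trM x U j) (FW.trP x U j)
  rw [← hf] at hgk
  linarith [hgk]

lemma sum_bdj_one (x : Fin (N + 1) → ℝ) (g : Fin N → ℝ) :
    ∑ j, FW.bdj x g j 1 = 0 := by
  unfold FW.bdj
  simp only [Polynomial.eval_one, mul_one]
  rw [Finset.sum_sub_distrib, sum_shift g, sub_self]

lemma ipj_zero (x : Fin (N + 1) → ℝ) (ω : Fin N → Polynomial ℝ) (j : Fin N) :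
    FW.ipj x ω j 0 = 0 := by
  unfold FW.ipj
  simp

lemma ipfj_zero (x : Fin (N + 1) → ℝ) (f : ℝ → ℝ) (ω : Fin N → Polynomial ℝ) (j : Fin N) :
    FW.ipfj x f ω j 0 = 0 := by
  unfold FW.ipfj
  simp

lemma degree_one_le_k (k : ℕ) : (1 : Polynomial ℝ).degree ≤ (k : WithBot ℕ) :=
  le_trans Polynomial.degree_one_le (by exact_mod_cast Nat.zero_le k)

end FWP
namespace FWP

lemma int_eval (c d : ℝ) (k : ℕ) (P : Polynomial ℝ) (hP : P.degree ≤ (k : WithBot ℕ)) :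
    ∫ y in c..d, P.eval y
      = ∑ m ∈ Finset.range (k+1), P.coeff m * ∫ y in c..d, y ^ m := by
  have hnd : P.natDegree < k + 1 :=
    Nat.lt_succ_of_le (Polynomial.natDegree_le_iff_degree_le.2 hP)
  calc ∫ y in c..d, P.eval y
      = ∫ y in c..d, ∑ m ∈ Finset.range (k+1), P.coeff m * y ^ m := by
        apply intervalIntegral.integral_congr
        intro y _
        exact Polynomial.eval_eq_sum_range' hnd y
    _ = ∑ m ∈ Finset.range (k+1), ∫ y in c..d, P.coeff m * y ^ m := by
        apply intervalIntegral.integral_finset_sum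
        intro m _
        exact (continuous_const.mul (continuous_pow m)).intervalIntegrable c d
    _ = ∑ m ∈ Finset.range (k+1), P.coeff m * ∫ y in c..d, y ^ m := by
        simp [intervalIntegral.integral_const_mul]

lemma int_eval_mul (c d : ℝ) (k : ℕ) (P B : Polynomial ℝ)
    (hP : P.degree ≤ (k : WithBot ℕ)) (hB : B.degree ≤ (k : WithBot ℕ)) :
    ∫ y in c..d, P.eval y * B.eval y
      = ∑ m ∈ Finset.range (k+1), ∑ n ∈ Finset.range (k+1),
          P.coeff m * B.coeff n * ∫ y in c..d, y ^ (m + n) := by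
  have hndP : P.natDegree < k + 1 :=
    Nat.lt_succ_of_le (Polynomial.natDegree_le_iff_degree_le.2 hP)
  have hndB : B.natDegree < k + 1 :=
    Nat.lt_succ_of_le (Polynomial.natDegree_le_iff_degree_le.2 hB)
  calc ∫ y in c..d, P.eval y * B.eval y
      = ∫ y in c..d, ∑ m ∈ Finset.range (k+1), ∑ n ∈ Finset.range (k+1),
          P.coeff m * B.coeff n * y ^ (m + n) := by
        apply intervalIntegral.integral_congr
        intro y _
        simp only
        rw [Polynomial.eval_eq_sum_range' hndP y, Polynomial.eval_eq_sum_range' hndB y,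
          Finset.sum_mul_sum]
        refine Finset.sum_congr rfl fun m _ => Finset.sum_congr rfl fun n _ => ?_
        ring
    _ = ∑ m ∈ Finset.range (k+1), ∑ n ∈ Finset.range (k+1),
          P.coeff m * B.coeff n * ∫ y in c..d, y ^ (m + n) := by
        rw [intervalIntegral.integral_finset_sum]
        · refine Finset.sum_congr rfl fun m _ => ?_
          rw [intervalIntegral.integral_finset_sum]
          · refine Finset.sum_congr rfl fun n _ => ?_
            exact intervalIntegral.integral_const_mul _ _
          · intro n _
            exact (continuous_const.mul (continuous_pow _)).intervalIntegrable c d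
        · intro m _
          exact (Continuous.intervalIntegrable (by continuity) c d)

end FWP

theorem stmt9 {N : ℕ} [NeZero N] (hN : 1 ≤ N) (a b : ℝ) (hab : a < b)
    (x : Fin (N + 1) → ℝ) (hx : StrictMono x) (hxa : x 0 = a) (hxb : x (Fin.last N) = b)
    (k : ℕ) (p : ℕ) (hp : 2 ≤ p) (T : ℝ) (hT : 0 < T)
    (u u' v q : ℝ → Fin N → Polynomial ℝ)
    (hdeg : ∀ t ∈ Set.Icc (0:ℝ) T,
      FW.memV k (u t) ∧ FW.memV k (u' t) ∧ FW.memV k (v t) ∧ FW.memV k (q t))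
    (hder : ∀ t ∈ Set.Icc (0:ℝ) T, ∀ (j : Fin N) (m : ℕ),
      HasDerivWithinAt (fun σ => (u σ j).coeff m) ((u' t j).coeff m) (Set.Icc (0:ℝ) T) t)
    (heq1 : ∀ t ∈ Set.Icc (0:ℝ) T, ∀ (j : Fin N), ∀ φ : Polynomial ℝ,
      φ.degree ≤ (k : WithBot ℕ) →
      FW.ipj x (u' t) j φ
        + FW.bdj x (fun i => FW.godunov (fun w => w ^ p / (p : ℝ))
            (FW.trM x (u t) i) (FW.trP x (u t) i)) j φ
        - FW.ipfj x (fun w => w ^ p / (p : ℝ)) (u t) j (Polynomial.derivative φ)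
        + FW.ipj x (v t) j φ = 0)
    (heq2 : ∀ t ∈ Set.Icc (0:ℝ) T, ∀ (j : Fin N), ∀ φ : Polynomial ℝ,
      φ.degree ≤ (k : WithBot ℕ) →
      FW.ipj x (v t) j φ - FW.bdj x (FW.trM x (q t)) j φ
          + FW.ipj x (q t) j (Polynomial.derivative φ)
        = FW.bdj x (FW.trM x (u t)) j φ - FW.ipj x (u t) j (Polynomial.derivative φ))
    (heq3 : ∀ t ∈ Set.Icc (0:ℝ) T, ∀ (j : Fin N), ∀ φ : Polynomial ℝ,
      φ.degree ≤ (k : WithBot ℕ) →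
      FW.ipj x (q t) j φ
        = FW.bdj x (FW.trP x (v t)) j φ - FW.ipj x (v t) j (Polynomial.derivative φ)) :
    (∀ t ∈ Set.Icc (0:ℝ) T,
      HasDerivWithinAt (fun σ => ∑ j : Fin N, ∫ y in (x j.castSucc)..(x j.succ), (u σ j).eval y) 0 (Set.Icc (0:ℝ) T) t)
    ∧ (∀ t ∈ Set.Icc (0:ℝ) T, ∃ e ≤ (0:ℝ),
      HasDerivWithinAt (fun σ => ∑ j : Fin N, ∫ y in (x j.castSucc)..(x j.succ), ((u σ j).eval y) ^ 2) e (Set.Icc (0:ℝ) T) t) := by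
  have hp1 : 1 ≤ p := le_trans (by norm_num) hp
  have hk1 : (1 : Polynomial ℝ).degree ≤ (k : WithBot ℕ) := FWP.degree_one_le_k k
  set C : Fin N → ℕ → ℝ := fun j m => ∫ y in (x j.castSucc)..(x j.succ), y ^ m with hC
  -- mass of v vanishes
  have hv1 : ∀ t ∈ Set.Icc (0:ℝ) T, ∑ j, FW.ipj x (v t) j 1 = 0 := by
    intro t ht
    have hcell : ∀ j : Fin N, FW.ipj x (v t) j 1
        = FW.bdj x (FW.trM x (q t)) j 1 + FW.bdj x (FW.trM x (u t)) j 1 := by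
      intro j
      have h := heq2 t ht j 1 hk1
      rw [Polynomial.derivative_one, FWP.ipj_zero, FWP.ipj_zero] at h
      linarith
    rw [Finset.sum_congr rfl fun j _ => hcell j, Finset.sum_add_distrib,
      FWP.sum_bdj_one, FWP.sum_bdj_one, add_zero]
  -- mass of u' vanishes
  have hu'1 : ∀ t ∈ Set.Icc (0:ℝ) T, ∑ j, FW.ipj x (u' t) j 1 = 0 := by
    intro t ht
    have hcell : ∀ j : Fin N, FW.ipj x (u' t) j 1
        = -(FW.bdj x (fun i => FW.godunov (fun w => w ^ p / (p : ℝ))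
            (FW.trM x (u t) i) (FW.trP x (u t) i)) j 1) - FW.ipj x (v t) j 1 := by
      intro j
      have h := heq1 t ht j 1 hk1
      rw [Polynomial.derivative_one, FWP.ipfj_zero] at h
      linarith
    rw [Finset.sum_congr rfl fun j _ => hcell j, Finset.sum_sub_distrib, hv1 t ht,
      Finset.sum_neg_distrib, FWP.sum_bdj_one, neg_zero, sub_zero]
  -- energy dissipation inequality
  have hdiss : ∀ t ∈ Set.Icc (0:ℝ) T, ∑ j, FW.ipj x (u' t) j (u t j) ≤ 0 := by
    intro t ht
    have hS := FWP.sum_vu_nonneg x k (u t) (v t) (q t) (hdeg t ht).1 (hdeg t ht).2.2.1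
      (hdeg t ht).2.2.2 (fun j φ hφ => heq2 t ht j φ hφ) (fun j φ hφ => heq3 t ht j φ hφ)
    have hF := FWP.sum_flux_nonneg x p hp1 (u t)
    have hcell : ∀ j : Fin N, FW.ipj x (u' t) j (u t j)
        = -(FW.bdj x (fun i => FW.godunov (fun w => w ^ p / (p : ℝ))
            (FW.trM x (u t) i) (FW.trP x (u t) i)) j (u t j))
          + FW.ipfj x (fun w => w ^ p / (p : ℝ)) (u t) j (Polynomial.derivative (u t j))
          - FW.ipj x (v t) j (u t j) := by
      intro j
      have h := heq1 t ht j (u t j) ((hdeg t ht).1 j)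
      linarith
    rw [Finset.sum_congr rfl fun j _ => hcell j, Finset.sum_sub_distrib,
      Finset.sum_add_distrib, Finset.sum_neg_distrib]
    linarith
  constructor
  · -- mass conservation
    intro t ht
    have hD : HasDerivWithinAt
        (fun σ => ∑ j : Fin N, ∑ m ∈ Finset.range (k+1), (u σ j).coeff m * C j m)
        (∑ j : Fin N, ∑ m ∈ Finset.range (k+1), (u' t j).coeff m * C j m)
        (Set.Icc (0:ℝ) T) t := by
      apply HasDerivWithinAt.fun_sum
      intro j _
      exact HasDerivWithinAt.fun_sum fun m _ => (hder t ht j m).mul_const (C j m)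
    have hcong : ∀ σ ∈ Set.Icc (0:ℝ) T,
        (∑ j : Fin N, ∫ y in (x j.castSucc)..(x j.succ), (u σ j).eval y)
        = ∑ j : Fin N, ∑ m ∈ Finset.range (k+1), (u σ j).coeff m * C j m :=
      fun σ hσ => Finset.sum_congr rfl fun j _ =>
        FWP.int_eval _ _ k (u σ j) ((hdeg σ hσ).1 j)
    have hzero : (∑ j : Fin N, ∑ m ∈ Finset.range (k+1), (u' t j).coeff m * C j m) = 0 := by
      have hval : (∑ j : Fin N, ∑ m ∈ Finset.range (k+1), (u' t j).coeff m * C j m)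
          = ∑ j, FW.ipj x (u' t) j 1 := by
        refine Finset.sum_congr rfl fun j _ => ?_
        rw [← FWP.int_eval _ _ k (u' t j) ((hdeg t ht).2.1 j)]
        unfold FW.ipj
        exact intervalIntegral.integral_congr fun y _ => by simp
      rw [hval]
      exact hu'1 t ht
    have hfin := hD.congr hcong (hcong t ht)
    rwa [hzero] at hfin
  · -- energy dissipation
    intro t ht
    set E : ℝ := ∑ j : Fin N, ∑ m ∈ Finset.range (k+1), ∑ n ∈ Finset.range (k+1),
      ((u' t j).coeff m * (u t j).coeff n + (u t j).coeff m * (u' t j).coeff n) * C j (m+n)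
      with hE
    have hEval : E = 2 * ∑ j, FW.ipj x (u' t) j (u t j) := by
      have hcell : ∀ j : Fin N,
          (∑ m ∈ Finset.range (k+1), ∑ n ∈ Finset.range (k+1),
            ((u' t j).coeff m * (u t j).coeff n + (u t j).coeff m * (u' t j).coeff n) * C j (m+n))
          = 2 * FW.ipj x (u' t) j (u t j) := by
        intro j
        have hsplit : (∑ m ∈ Finset.range (k+1), ∑ n ∈ Finset.range (k+1),
            ((u' t j).coeff m * (u t j).coeff n + (u t j).coeff m * (u' t j).coeff n) * C j (m+n))
          = (∑ m ∈ Finset.range (k+1), ∑ n ∈ Finset.range (k+1),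
              (u' t j).coeff m * (u t j).coeff n * C j (m+n))
            + ∑ m ∈ Finset.range (k+1), ∑ n ∈ Finset.range (k+1),
              (u t j).coeff m * (u' t j).coeff n * C j (m+n) := by
          rw [← Finset.sum_add_distrib]
          refine Finset.sum_congr rfl fun m _ => ?_
          rw [← Finset.sum_add_distrib]
          refine Finset.sum_congr rfl fun n _ => ?_
          ring
        have h1 : (∑ m ∈ Finset.range (k+1), ∑ n ∈ Finset.range (k+1),
            (u' t j).coeff m * (u t j).coeff n * C j (m+n)) = FW.ipj x (u' t) j (u t j) := by
          rw [← FWP.int_eval_mul _ _ k (u' t j) (u t j) ((hdeg t ht).2.1 j) ((hdeg t ht).1 j)]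
          rfl
        have h2 : (∑ m ∈ Finset.range (k+1), ∑ n ∈ Finset.range (k+1),
            (u t j).coeff m * (u' t j).coeff n * C j (m+n)) = FW.ipj x (u' t) j (u t j) := by
          rw [← FWP.int_eval_mul _ _ k (u t j) (u' t j) ((hdeg t ht).1 j) ((hdeg t ht).2.1 j)]
          exact FWP.ip_comm x (u t) (u' t) j
        rw [hsplit, h1, h2]
        ring
      rw [hE, Finset.sum_congr rfl fun j _ => hcell j, ← Finset.mul_sum]
    refine ⟨E, ?_, ?_⟩
    · rw [hEval]
      linarith [hdiss t ht]
    · have hD : HasDerivWithinAt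
          (fun σ => ∑ j : Fin N, ∑ m ∈ Finset.range (k+1), ∑ n ∈ Finset.range (k+1),
            (u σ j).coeff m * (u σ j).coeff n * C j (m+n)) E (Set.Icc (0:ℝ) T) t := by
        rw [hE]
        apply HasDerivWithinAt.fun_sum
        intro j _
        apply HasDerivWithinAt.fun_sum
        intro m _
        apply HasDerivWithinAt.fun_sum
        intro n _
        exact ((hder t ht j m).mul (hder t ht j n)).mul_const (C j (m+n))
      have hcong : ∀ σ ∈ Set.Icc (0:ℝ) T,
          (∑ j : Fin N, ∫ y in (x j.castSucc)..(x j.succ), ((u σ j).eval y) ^ 2)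
          = ∑ j : Fin N, ∑ m ∈ Finset.range (k+1), ∑ n ∈ Finset.range (k+1),
            (u σ j).coeff m * (u σ j).coeff n * C j (m+n) := by
        intro σ hσ
        refine Finset.sum_congr rfl fun j _ => ?_
        rw [← FWP.int_eval_mul _ _ k (u σ j) (u σ j) ((hdeg σ hσ).1 j) ((hdeg σ hσ).1 j)]
        exact intervalIntegral.integral_congr fun y _ => by ring
      exact hD.congr hcong (hcong t ht)
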